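/- Let g be a finite-dimensional real Lie algebra equipped with an invariant inner product, let h be a Lie subalgebra of g, and let m be the orthogonal complement of h in g. Assume that the center of g intersects m trivially. Then for every nonzero vector w ∈ m there exists a vector v ∈ m with ⟨w, v⟩ = 0 and ⁅w, v⁆ ≠ 0. -/

import Mathlib

/-- Let `g` be a finite-dimensional real Lie algebra equipped with an
invariant inner product `B` (a symmetric positive-definite bilinear form satisfying
`⟨⁅x,y⁆, z⟩ = -⟨y, ⁅x,z⁆⟩`), let `h` be a Lie subalgebra of `g`, and let `m` be the
orthogonal complement of `h` in `g`. Assume that the center of `g` intersects `m`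
trivially. Then for every nonzero `w ∈ m` there is `v ∈ m` with `⟨w, v⟩ = 0` and
`⁅w, v⁆ ≠ 0`. -/
theorem flagwise_stmt0 (g : Type*) [LieRing g] [LieAlgebra ℝ g] [FiniteDimensional ℝ g]
    (B : LinearMap.BilinForm ℝ g)
    (hsymm : ∀ x y : g, B x y = B y x)
    (hpos : ∀ x : g, x ≠ 0 → 0 < B x x)
    (hinv : ∀ x y z : g, B ⁅x, y⁆ z = - B y ⁅x, z⁆)
    (h : LieSubalgebra ℝ g)
    (m : Set g) (hm : m = {w : g | ∀ x ∈ h, B w x = 0})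
    (hcenter : ∀ w ∈ m, (∀ y : g, ⁅w, y⁆ = 0) → w = 0) :
    ∀ w ∈ m, w ≠ 0 → ∃ v ∈ m, B w v = 0 ∧ ⁅w, v⁆ ≠ 0 := by
  intro w hw hw0
  by_contra hcon
  push_neg at hcon
  -- so every v ∈ m orthogonal to w commutes with w
  have hzero : ∀ x : g, x ≠ 0 → B x x ≠ 0 := fun x hx => ne_of_gt (hpos x hx)
  have hrefl : B.IsRefl := fun x y hxy => by rw [hsymm]; exact hxy
  -- m equals the orthogonal of h.toSubmodule
  have hmsub : m = (B.orthogonal h.toSubmodule : Set g) := by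
    rw [hm]; ext z
    constructor
    · intro hz n hn
      exact hrefl z n (hz n hn)
    · intro hz n hn
      exact hrefl n z (hz n hn)
  -- restriction of B to h is nondegenerate
  have hnd : (B.restrict h.toSubmodule).Nondegenerate := by
    constructor <;> intro x hx
    all_goals
      by_contra hx0
      have := hzero x.1 (fun hc => hx0 (Subtype.ext hc))
      exact this (hx x)
  have hcompl : IsCompl h.toSubmodule (B.orthogonal h.toSubmodule) :=
    B.isCompl_orthogonal_of_restrict_nondegenerate hrefl hnd
  -- Step 1: w commutes with everything in m
  have hbm : ∀ v ∈ m, ⁅w, v⁆ = 0 := by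
    intro v hv
    set c : ℝ := B w v / B w w with hc
    have hv' : v - c • w ∈ m := by
      rw [hm] at *
      intro x hx
      simp only [map_sub, map_smul, LinearMap.sub_apply, LinearMap.smul_apply,
        hv x hx, hw x hx, smul_zero, sub_zero]
    have hov' : B w (v - c • w) = 0 := by
      have hww : B w w ≠ 0 := hzero w hw0
      simp only [map_sub, map_smul, smul_eq_mul, hc]
      field_simp
      ring
    have hlie : ⁅w, v - c • w⁆ = 0 := hcon (v - c • w) hv' hov'
    have : ⁅w, v⁆ = ⁅w, v - c • w⁆ + c • ⁅w, w⁆ := by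
      rw [lie_sub, lie_smul]; abel
    simp [this, hlie]
  -- Step 2: w commutes with everything in h
  have hbh : ∀ y ∈ h.toSubmodule, ⁅w, y⁆ = 0 := by
    intro y hy
    set u : g := ⁅w, y⁆ with hu
    have hum : u ∈ m := by
      rw [hm] at hw ⊢
      intro z hz
      have hne : u = -⁅y, w⁆ := by rw [hu, ← lie_skew]
      have hwz : B w ⁅y, z⁆ = 0 := hw _ (h.lie_mem hy hz)
      rw [hne, map_neg, LinearMap.neg_apply, hinv y w z, hwz, neg_zero, neg_zero]
    -- decompose u = uh + um
    have hmem : u ∈ h.toSubmodule ⊔ B.orthogonal h.toSubmodule := by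
      rw [hcompl.sup_eq_top]; trivial
    obtain ⟨a, ha, b, hb, hab⟩ := Submodule.mem_sup.mp hmem
    have hbmem : b ∈ m := by rw [hmsub]; exact hb
    have h1 : B u a = 0 := by
      rw [hm] at hum; exact hum a ha
    have h2 : B u b = 0 := by
      rw [hu, hinv w y b, hbm b hbmem, map_zero, neg_zero]
    have huu : B u u = 0 := by
      nth_rewrite 2 [← hab]
      rw [map_add, h1, h2, add_zero]
    by_contra hu0
    exact hzero u hu0 huu
  -- Step 3: w is central, contradiction
  apply hw0
  apply hcenter w hw
  intro y
  have hmem : y ∈ h.toSubmodule ⊔ B.orthogonal h.toSubmodule := by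
    rw [hcompl.sup_eq_top]; trivial
  obtain ⟨a, ha, b, hb, hab⟩ := Submodule.mem_sup.mp hmem
  have hbmem : b ∈ m := by rw [hmsub]; exact hb
  rw [← hab, lie_add, hbh a ha, hbm b hbmem, add_zero]
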